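/- The map α ↦ H(α, z*(α), 0) is nonincreasing on [0,∞): for all 0 ≤ α₁ ≤ α₂ one has H(α₂, z*(α₂), 0) ≤ H(α₁, z*(α₁), 0). Moreover, for every α ≥ 0 its derivative equals -R_A (1 + 2kαR_P + k²α²R_P(R_A+R_P)) / ( 2 (1 + αk(R_A+R_P))² ), which is ≤ 0. -/

import Mathlib

/-- The map `H(α,z,γ)` of Section 4, with quadratic cost `k(a) = k a²/2`. -/
noncomputable def Hfun (R_A R_P k αAlow αAhigh : ℝ) (α z γ : ℝ) : ℝ :=
  z / k - z ^ 2 / (2 * k) - α / 2 * (R_A * z ^ 2 + R_P * (1 - z) ^ 2) - α / 2 * γ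
    + sInf ((fun α' => α' * γ / 2) '' Set.Icc αAlow αAhigh)

/-- The optimal sensitivity `z*(α)`. -/
noncomputable def zStar (R_A R_P k α : ℝ) : ℝ :=
  (1 + k * α * R_P) / (1 + α * k * (R_A + R_P))

/-- The map `α ↦ H(α, z*(α), 0)` is nonincreasing on `[0,∞)`, and its derivative
equals `-R_A(1 + 2kαR_P + k²α²R_P(R_A+R_P)) / (2(1 + αk(R_A+R_P))²) ≤ 0`. -/
theorem H_zStar_antitone (R_A R_P k αAlow αAhigh : ℝ)
    (hRA : 0 < R_A) (hRP : 0 < R_P) (hk : 0 < k)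
    (hlow : 0 < αAlow) (hle : αAlow ≤ αAhigh) :
    (∀ α₁ α₂ : ℝ, 0 ≤ α₁ → α₁ ≤ α₂ →
      Hfun R_A R_P k αAlow αAhigh α₂ (zStar R_A R_P k α₂) 0
        ≤ Hfun R_A R_P k αAlow αAhigh α₁ (zStar R_A R_P k α₁) 0) ∧
    (∀ α : ℝ, 0 ≤ α →
      HasDerivAt (fun β => Hfun R_A R_P k αAlow αAhigh β (zStar R_A R_P k β) 0)
        (-(R_A * (1 + 2 * k * α * R_P + k ^ 2 * α ^ 2 * R_P * (R_A + R_P)))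
          / (2 * (1 + α * k * (R_A + R_P)) ^ 2)) α ∧
      -(R_A * (1 + 2 * k * α * R_P + k ^ 2 * α ^ 2 * R_P * (R_A + R_P)))
          / (2 * (1 + α * k * (R_A + R_P)) ^ 2) ≤ 0) := by
  have hS : 0 < R_A + R_P := by linarith
  -- closed form
  set g : ℝ → ℝ := fun β =>
    (1 + k * β * R_P) ^ 2 / (2 * k * (1 + β * k * (R_A + R_P))) - β * R_P / 2 with hg
  -- sInf term is 0
  have hinf : sInf ((fun α' : ℝ => α' * (0:ℝ) / 2) '' Set.Icc αAlow αAhigh) = 0 := by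
    have hne : (Set.Icc αAlow αAhigh).Nonempty := Set.nonempty_Icc.2 hle
    have : (fun α' : ℝ => α' * (0:ℝ) / 2) '' Set.Icc αAlow αAhigh = {0} := by
      rw [show (fun α' : ℝ => α' * (0:ℝ) / 2) = fun _ => (0:ℝ) by funext x; ring]
      exact Set.Nonempty.image_const hne 0
    rw [this, csInf_singleton]
  -- Hfun at z* equals g wherever the denominator is nonzero
  have hEq : ∀ β : ℝ, 1 + β * k * (R_A + R_P) ≠ 0 →
      Hfun R_A R_P k αAlow αAhigh β (zStar R_A R_P k β) 0 = g β := by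
    intro β hD
    simp only [Hfun, zStar, hinf, hg]
    have hD' : 1 + k * β * (R_A + R_P) ≠ 0 := by rwa [mul_comm k β]
    field_simp
    ring
  -- positivity of the denominator near any α ≥ 0
  have hDpos : ∀ α : ℝ, 0 ≤ α → 0 < 1 + α * k * (R_A + R_P) := by
    intro α hα
    have : 0 ≤ α * k * (R_A + R_P) := by positivity
    linarith
  -- derivative of g, valid wherever the denominator is nonzero
  have hgderiv : ∀ α : ℝ, 1 + α * k * (R_A + R_P) ≠ 0 →
      HasDerivAt g (-(R_A * (1 + 2 * k * α * R_P + k ^ 2 * α ^ 2 * R_P * (R_A + R_P)))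
          / (2 * (1 + α * k * (R_A + R_P)) ^ 2)) α := by
    intro α hD
    have h1 : HasDerivAt (fun β : ℝ => 1 + k * β * R_P) (k * R_P) α := by
      simpa using (((hasDerivAt_id α).const_mul k).mul_const R_P).const_add 1
    have hN : HasDerivAt (fun β : ℝ => (1 + k * β * R_P) ^ 2)
        (2 * (1 + k * α * R_P) * (k * R_P)) α := by
      simpa [mul_comm, mul_assoc, mul_left_comm] using h1.fun_pow 2
    have hM : HasDerivAt (fun β : ℝ => 2 * k * (1 + β * k * (R_A + R_P)))
        (2 * k * (k * (R_A + R_P))) α := by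
      have : HasDerivAt (fun β : ℝ => 1 + β * k * (R_A + R_P)) (k * (R_A + R_P)) α := by
        simpa using (((hasDerivAt_id α).mul_const k).mul_const (R_A + R_P)).const_add 1
      simpa using this.const_mul (2 * k)
    have hM0 : 2 * k * (1 + α * k * (R_A + R_P)) ≠ 0 := by
      exact mul_ne_zero (by positivity) hD
    have hdiv := hN.fun_div hM hM0
    have hlin : HasDerivAt (fun β : ℝ => β * R_P / 2) (R_P / 2) α := by
      simpa using ((hasDerivAt_id α).mul_const R_P).div_const 2
    have this : HasDerivAt g _ α := hdiv.sub hlin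
    convert this using 1
    have hD' : 1 + k * α * (R_A + R_P) ≠ 0 := by rwa [mul_comm k α]
    field_simp
    ring
  -- HasDerivAt of the original function, via local equality with g
  have hfderiv : ∀ α : ℝ, 0 ≤ α →
      HasDerivAt (fun β => Hfun R_A R_P k αAlow αAhigh β (zStar R_A R_P k β) 0)
        (-(R_A * (1 + 2 * k * α * R_P + k ^ 2 * α ^ 2 * R_P * (R_A + R_P)))
          / (2 * (1 + α * k * (R_A + R_P)) ^ 2)) α := by
    intro α hα
    have hD := hDpos α hα
    have hcont : Continuous (fun β : ℝ => 1 + β * k * (R_A + R_P)) := by continuity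
    have hev : ∀ᶠ β in nhds α, 0 < 1 + β * k * (R_A + R_P) :=
      (hcont.tendsto α).eventually (eventually_gt_nhds hD)
    have hev2 : (fun β => Hfun R_A R_P k αAlow αAhigh β (zStar R_A R_P k β) 0) =ᶠ[nhds α] g := by
      filter_upwards [hev] with β hβ
      exact hEq β (ne_of_gt hβ)
    exact (hgderiv α (ne_of_gt hD)).congr_of_eventuallyEq hev2
  have hle0 : ∀ α : ℝ, 0 ≤ α →
      -(R_A * (1 + 2 * k * α * R_P + k ^ 2 * α ^ 2 * R_P * (R_A + R_P)))
          / (2 * (1 + α * k * (R_A + R_P)) ^ 2) ≤ 0 := by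
    intro α hα
    have hD := hDpos α hα
    apply div_nonpos_of_nonpos_of_nonneg
    · have : (0:ℝ) < 1 + 2 * k * α * R_P + k ^ 2 * α ^ 2 * R_P * (R_A + R_P) := by positivity
      nlinarith
    · positivity
  refine ⟨?_, fun α hα => ⟨hfderiv α hα, hle0 α hα⟩⟩
  intro α₁ α₂ h1 h2
  have hanti : AntitoneOn (fun β => Hfun R_A R_P k αAlow αAhigh β (zStar R_A R_P k β) 0)
      (Set.Ici (0:ℝ)) := by
    apply antitoneOn_of_deriv_nonpos (convex_Ici 0)
    · intro x hx
      exact (hfderiv x hx).continuousAt.continuousWithinAt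
    · rw [interior_Ici]
      intro x hx
      exact (hfderiv x (le_of_lt hx)).differentiableAt.differentiableWithinAt
    · rw [interior_Ici]
      intro x hx
      rw [(hfderiv x (le_of_lt hx)).deriv]
      exact hle0 x (le_of_lt hx)
  exact hanti h1 (le_trans h1 h2) h2
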